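/- Define real polynomials V_n by V₀(x) = 1/2, V₁(x) = x − 1, and V_n(x) = 2(x − n) V_{n−1}(x) − n(n−1) V_{n−2}(x) for n ≥ 2. Then for every n ≥ 0 and every real x, V_n(x) = (1/2) Σ_{j=0}^{n} (−1)^{n−j} (n! (n+1)! / ((n−j)! j! (j+1)!)) (2x)^j; that is, V_n(x) equals (−1)^n n!/2 times the associated Laguerre polynomial L_n^{(1)} evaluated at 2x. -/

import Mathlib

noncomputable def softcoreC (n j : ℕ) : ℝ :=
  if j ≤ n then
    (-1 : ℝ) ^ (n - j) *
      ((n.factorial : ℝ) * ((n + 1).factorial : ℝ) /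
        (((n - j).factorial : ℝ) * (j.factorial : ℝ) * ((j + 1).factorial : ℝ)))
  else 0

lemma softcoreC_of_le {n j : ℕ} (h : j ≤ n) :
    softcoreC n j = (-1 : ℝ) ^ (n - j) *
      ((n.factorial : ℝ) * ((n + 1).factorial : ℝ) /
        (((n - j).factorial : ℝ) * (j.factorial : ℝ) * ((j + 1).factorial : ℝ))) := by
  simp [softcoreC, h]

lemma softcoreC_of_gt {n j : ℕ} (h : n < j) : softcoreC n j = 0 := by
  simp [softcoreC, Nat.not_le.mpr h]

lemma fac_ne (n : ℕ) : ((n.factorial : ℝ)) ≠ 0 :=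
  Nat.cast_ne_zero.mpr (Nat.factorial_ne_zero n)

lemma softcoreC_rec0 (m : ℕ) :
    softcoreC (m+2) 0 = (0:ℝ)
      - 2*((m:ℝ)+2) * softcoreC (m+1) 0 - ((m:ℝ)+2)*((m:ℝ)+1) * softcoreC m 0 := by
  rw [softcoreC_of_le (by omega), softcoreC_of_le (by omega), softcoreC_of_le (by omega)]
  simp only [Nat.sub_zero]
  rw [show m+2+1 = m+3 from rfl, show m+1+1 = m+2 from rfl]
  have e3 : (m+3).factorial = (m+3) * ((m+2) * ((m+1) * m.factorial)) := by
    rw [show m+3 = (m+2)+1 from rfl, Nat.factorial_succ,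
      show m+2 = (m+1)+1 from rfl, Nat.factorial_succ, Nat.factorial_succ]
  have e2 : (m+2).factorial = (m+2) * ((m+1) * m.factorial) := by
    rw [show m+2 = (m+1)+1 from rfl, Nat.factorial_succ, Nat.factorial_succ]
  have e1 : (m+1).factorial = (m+1) * m.factorial := Nat.factorial_succ m
  rw [e3, e2, e1]
  have h0 := fac_ne m
  push_cast
  simp only [Nat.factorial_zero, Nat.factorial_one, Nat.cast_one, mul_one]
  rw [show m+2 = (m+1)+1 from rfl, pow_succ, pow_succ]
  field_simp
  ring

lemma softcoreC_rec (m j : ℕ) :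
    softcoreC (m+2) j = (if j = 0 then 0 else softcoreC (m+1) (j-1))
      - 2*((m:ℝ)+2) * softcoreC (m+1) j - ((m:ℝ)+2)*((m:ℝ)+1) * softcoreC m j := by
  rcases j with _ | i
  · -- j = 0
    rw [if_pos rfl]
    exact softcoreC_rec0 m
  · rcases lt_or_ge i m with h | h
    · -- main case: 1 ≤ j = i+1 ≤ m, write m = i + k + 1
      obtain ⟨k, rfl⟩ : ∃ k, m = i + k + 1 := ⟨m - i - 1, by omega⟩
      rw [softcoreC_of_le (by omega), softcoreC_of_le (by omega),
        softcoreC_of_le (by omega), softcoreC_of_le (by omega)]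
      simp only [Nat.add_sub_cancel, if_neg (Nat.succ_ne_zero i)]
      rw [show i+k+1+2 - (i+1) = k+2 by omega, show i+k+1+1 - i = k+2 by omega,
        show i+k+1+1 - (i+1) = k+1 by omega, show i+k+1 - (i+1) = k by omega,
        show i+k+1+2 = i+k+3 from rfl, show i+k+1+2+1 = i+k+4 from rfl,
        show i+k+1+1 = i+k+2 from rfl, show i+k+1+1+1 = i+k+3 from rfl,
        show i+1+1 = i+2 from rfl]
      have e4 : (i+k+4).factorial = (i+k+4)*((i+k+3)*((i+k+2)*(i+k+1).factorial)) := by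
        rw [show i+k+4 = (i+k+3)+1 from rfl, Nat.factorial_succ,
          show i+k+3 = (i+k+2)+1 from rfl, Nat.factorial_succ,
          show i+k+2 = (i+k+1)+1 from rfl, Nat.factorial_succ]
      have e3 : (i+k+3).factorial = (i+k+3)*((i+k+2)*(i+k+1).factorial) := by
        rw [show i+k+3 = (i+k+2)+1 from rfl, Nat.factorial_succ,
          show i+k+2 = (i+k+1)+1 from rfl, Nat.factorial_succ]
      have e2 : (i+k+2).factorial = (i+k+2)*(i+k+1).factorial := by
        rw [show i+k+2 = (i+k+1)+1 from rfl, Nat.factorial_succ]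
      have ek2 : (k+2).factorial = (k+2)*((k+1)*k.factorial) := by
        rw [show k+2 = (k+1)+1 from rfl, Nat.factorial_succ, Nat.factorial_succ]
      have ek1 : (k+1).factorial = (k+1)*k.factorial := Nat.factorial_succ k
      have ei2 : (i+2).factorial = (i+2)*((i+1)*i.factorial) := by
        rw [show i+2 = (i+1)+1 from rfl, Nat.factorial_succ, Nat.factorial_succ]
      have ei1 : (i+1).factorial = (i+1)*i.factorial := Nat.factorial_succ i
      rw [e4, e3, e2, ek2, ek1, ei2, ei1]
      have h0 := fac_ne i
      have h1 := fac_ne k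
      have h2 := fac_ne (i+k+1)
      push_cast
      rw [show k+2 = (k+1)+1 from rfl]
      simp only [pow_succ]
      field_simp
      ring
    · rcases eq_or_lt_of_le h with h' | h'
      · -- i = m, j = m+1
        have hi : i = m := h'.symm
        subst hi
        rw [softcoreC_of_le (by omega), softcoreC_of_le (by omega),
          softcoreC_of_le (by omega), softcoreC_of_gt (by omega)]
        simp only [if_neg (Nat.succ_ne_zero i)]
        rw [show i+2 - (i+1) = 1 by omega, show i+1-1 = i by omega,
          show i+1 - i = 1 by omega, show i+1 - (i+1) = 0 by omega,
          show i+2+1 = i+3 from rfl, show i+1+1 = i+2 from rfl]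
        have e3 : (i+3).factorial = (i+3)*((i+2)*((i+1)*i.factorial)) := by
          rw [show i+3 = (i+2)+1 from rfl, Nat.factorial_succ,
            show i+2 = (i+1)+1 from rfl, Nat.factorial_succ, Nat.factorial_succ]
        have e2 : (i+2).factorial = (i+2)*((i+1)*i.factorial) := by
          rw [show i+2 = (i+1)+1 from rfl, Nat.factorial_succ, Nat.factorial_succ]
        have e1 : (i+1).factorial = (i+1)*i.factorial := Nat.factorial_succ i
        rw [e3, e2, e1]
        have h0 := fac_ne i
        push_cast
        field_simp
        ring
      · rcases eq_or_lt_of_le (Nat.succ_le_of_lt h') with h'' | h''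
        · -- i = m+1, j = m+2
          have hi : i = m+1 := h''.symm
          subst hi
          rw [softcoreC_of_le (by omega), softcoreC_of_le (by omega),
            softcoreC_of_gt (by omega), softcoreC_of_gt (by omega)]
          simp only [if_neg (Nat.succ_ne_zero _)]
          rw [show m+2 - (m+1+1) = 0 by omega, show m+1+1-1 = m+1 by omega,
            show m+1 - (m+1) = 0 by omega,
            show m+2+1 = m+3 from rfl, show m+1+1 = m+2 from rfl, show m+1+1+1 = m+3 from rfl]
          have h0 := fac_ne (m+2)
          have h1 := fac_ne (m+3)
          have h2 := fac_ne (m+1)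
          simp only [Nat.factorial_zero]
          push_cast
          field_simp
          ring
        · -- j > m+2 : everything zero
          rw [softcoreC_of_gt (by omega), softcoreC_of_gt (by omega),
            softcoreC_of_gt (by omega), softcoreC_of_gt (by omega)]
          simp

noncomputable def softcoreT (n : ℕ) (x : ℝ) : ℝ :=
  ∑ j ∈ Finset.range (n+1), softcoreC n j * (2*x)^j

lemma softcoreT_rec (m : ℕ) (x : ℝ) :
    softcoreT (m+2) x = 2*(x - ((m:ℝ)+2)) * softcoreT (m+1) x
      - ((m:ℝ)+2)*((m:ℝ)+1) * softcoreT m x := by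
  have expand : softcoreT (m+2) x = ∑ j ∈ Finset.range (m+3),
      (((if j = 0 then 0 else softcoreC (m+1) (j-1))
        - 2*((m:ℝ)+2) * softcoreC (m+1) j
        - ((m:ℝ)+2)*((m:ℝ)+1) * softcoreC m j) * (2*x)^j) := by
    refine Finset.sum_congr rfl fun j _ => ?_
    rw [softcoreC_rec]
  rw [expand]
  simp only [sub_mul, Finset.sum_sub_distrib]
  have h1 : ∑ j ∈ Finset.range (m+3), (if j = 0 then 0 else softcoreC (m+1) (j-1)) * (2*x)^j
      = 2*x * softcoreT (m+1) x := by
    rw [Finset.sum_range_succ'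
      (fun j => (if j = 0 then (0:ℝ) else softcoreC (m+1) (j-1)) * (2*x)^j) (m+2)]
    rw [if_pos rfl, zero_mul, add_zero]
    simp only [softcoreT, Finset.mul_sum]
    refine Finset.sum_congr rfl fun j _ => ?_
    rw [if_neg (Nat.succ_ne_zero j), Nat.add_sub_cancel, pow_succ]
    ring
  have h2 : ∑ j ∈ Finset.range (m+3), 2*((m:ℝ)+2) * softcoreC (m+1) j * (2*x)^j
      = 2*((m:ℝ)+2) * softcoreT (m+1) x := by
    rw [Finset.sum_range_succ, softcoreC_of_gt (by omega)]
    simp only [softcoreT, Finset.mul_sum, zero_mul, mul_zero, add_zero]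
    exact Finset.sum_congr rfl fun j _ => by ring
  have h3 : ∑ j ∈ Finset.range (m+3), ((m:ℝ)+2)*((m:ℝ)+1) * softcoreC m j * (2*x)^j
      = ((m:ℝ)+2)*((m:ℝ)+1) * softcoreT m x := by
    rw [Finset.sum_range_succ, Finset.sum_range_succ, softcoreC_of_gt (by omega),
      softcoreC_of_gt (by omega)]
    simp only [softcoreT, Finset.mul_sum, zero_mul, mul_zero, add_zero]
    exact Finset.sum_congr rfl fun j _ => by ring
  rw [h1, h2, h3]
  ring

/-- The eigenvalue polynomials `V_n` of the 3-dimensional softcore Coulomb problem,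
defined by `V₀ = 1/2`, `V₁(x) = x − 1` and
`V_n(x) = 2(x−n)V_{n−1}(x) − n(n−1)V_{n−2}(x)`, are given explicitly by
`V_n(x) = (1/2) Σ_{j=0}^n (−1)^{n−j} (n!(n+1)!/((n−j)! j! (j+1)!)) (2x)^j`, i.e. `V_n`
is `(−1)^n n!/2` times the associated Laguerre polynomial `L_n^{(1)}` at `2x`. -/
theorem softcore_3d_laguerre
    (V : ℕ → ℝ → ℝ)
    (hV0 : ∀ x : ℝ, V 0 x = 1 / 2)
    (hV1 : ∀ x : ℝ, V 1 x = x - 1)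
    (hVrec : ∀ n : ℕ, 2 ≤ n → ∀ x : ℝ,
      V n x = 2 * (x - (n : ℝ)) * V (n - 1) x - (n : ℝ) * ((n : ℝ) - 1) * V (n - 2) x) :
    ∀ (n : ℕ) (x : ℝ),
      V n x = (1 / 2) * ∑ j ∈ Finset.range (n + 1),
        (-1 : ℝ) ^ (n - j) *
          ((n.factorial : ℝ) * ((n + 1).factorial : ℝ) /
            (((n - j).factorial : ℝ) * (j.factorial : ℝ) * ((j + 1).factorial : ℝ))) *
          (2 * x) ^ j := by
  have key : ∀ n x, V n x = (1/2) * softcoreT n x := by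
    intro n
    induction n using Nat.strong_induction_on with
    | _ n ih =>
      match n with
      | 0 =>
        intro x
        rw [hV0]
        simp [softcoreT, softcoreC, Nat.factorial]
      | 1 =>
        intro x
        rw [hV1]
        simp [softcoreT, softcoreC, Finset.sum_range_succ, Nat.factorial]
        ring
      | (m+2) =>
        intro x
        rw [hVrec (m+2) (by omega), show m+2-1 = m+1 from rfl, show m+2-2 = m from rfl,
          ih (m+1) (by omega), ih m (by omega), softcoreT_rec]
        push_cast
        ring
  intro n x
  rw [key n x]
  congr 1
  refine Finset.sum_congr rfl fun j hj => ?_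
  rw [softcoreC_of_le (Nat.lt_succ_iff.mp (Finset.mem_range.mp hj))]
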